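/- Let $\bar p \in \mathbb{E}^n_\nu$ with $\langle \bar p,\bar p\rangle = 1/\kappa$ for some $\kappa \neq 0$, let $V$ be a nondegenerate subspace of $\bar p^\perp$, and let $a \in V^\perp$ with $\langle a, \bar p\rangle = 1$ and $\tilde\kappa := \langle a,a\rangle \neq 0$. Set $c = \bar p - a/\tilde\kappa$ and $W = \mathbb{R}a \oplus V$. Then $\langle c,c\rangle = 1/\kappa - 1/\tilde\kappa$, $\langle c,a\rangle = 0$, and for any $p = c + \tilde p$ with $\tilde p \in W$: $\langle p,p\rangle = 1/\kappa$ if and only if $\langle \tilde p,\tilde p\rangle = 1/\tilde\kappa$. Consequently $\{p \in \mathbb{E}^n_\nu : \langle p,p\rangle = 1/\kappa\} \cap (\bar p + W) = c + \{\tilde p \in W : \langle \tilde p,\tilde p\rangle = 1/\tilde\kappa\}$. -/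

import Mathlib

/-- Non-null sphere in the hyperquadric `𝔼ⁿ_ν(κ)`.  With `⟨p̄,p̄⟩ = 1/κ`,
`V ⊆ p̄^⊥` nondegenerate, `a ∈ V^⊥`, `⟨a,p̄⟩ = 1`, `κ̃ = ⟨a,a⟩ ≠ 0`,
`c = p̄ - a/κ̃` and `W = ℝa ⊕ V`:  `⟨c,c⟩ = 1/κ - 1/κ̃`, `⟨c,a⟩ = 0`,
for `p̃ ∈ W` one has `⟨c+p̃, c+p̃⟩ = 1/κ ↔ ⟨p̃,p̃⟩ = 1/κ̃`, and hence
`{p : ⟨p,p⟩ = 1/κ} ∩ (p̄ + W) = c + {p̃ ∈ W : ⟨p̃,p̃⟩ = 1/κ̃}`. -/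
theorem hyperquadric_inter_affine_nonnull {V : Type*} [AddCommGroup V]
    [Module ℝ V] [FiniteDimensional ℝ V]
    (B : LinearMap.BilinForm ℝ V)
    (hsymm : ∀ x y : V, B x y = B y x)
    (pbar : V) (κ : ℝ) (hκ : κ ≠ 0) (hpbar : B pbar pbar = 1 / κ)
    (Vs : Submodule ℝ V)
    (hVperp : ∀ v ∈ Vs, B pbar v = 0)
    (hVnd : ∀ v ∈ Vs, (∀ w ∈ Vs, B v w = 0) → v = 0)
    (a : V) (haV : ∀ v ∈ Vs, B a v = 0)
    (hap : B a pbar = 1)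
    (κt : ℝ) (hκt : κt = B a a) (hκt0 : κt ≠ 0)
    (c : V) (hc : c = pbar - κt⁻¹ • a)
    (W : Submodule ℝ V) (hW : W = Submodule.span ℝ {a} ⊔ Vs) :
    B c c = 1 / κ - 1 / κt ∧
    B c a = 0 ∧
    (∀ pt ∈ W, (B (c + pt) (c + pt) = 1 / κ ↔ B pt pt = 1 / κt)) ∧
    {p : V | B p p = 1 / κ} ∩ {x : V | ∃ w ∈ W, x = pbar + w}
      = {x : V | ∃ pt ∈ W, B pt pt = 1 / κt ∧ x = c + pt} := by
  have hpa : B pbar a = 1 := by rw [hsymm]; exact hap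
  have hcc : B c c = 1 / κ - 1 / κt := by
    subst hc
    simp only [map_sub, map_smul, LinearMap.sub_apply, LinearMap.smul_apply,
      smul_eq_mul, hpbar, hpa, hap, ← hκt]
    field_simp
    ring
  have hca : B c a = 0 := by
    subst hc
    simp only [map_sub, map_smul, LinearMap.sub_apply, LinearMap.smul_apply,
      smul_eq_mul, hpa, ← hκt]
    field_simp
    ring
  -- c is orthogonal to everything in W
  have hcW : ∀ pt ∈ W, B c pt = 0 := by
    intro pt hpt
    rw [hW] at hpt
    rcases Submodule.mem_sup.mp hpt with ⟨y, hy, z, hz, rfl⟩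
    rcases Submodule.mem_span_singleton.mp hy with ⟨r, rfl⟩
    have hcz : B c z = 0 := by
      subst hc
      simp only [map_sub, map_smul, LinearMap.sub_apply, LinearMap.smul_apply,
        smul_eq_mul, hVperp z hz, haV z hz]
      ring
    simp [hcz, hca]
  have haW : a ∈ W := by
    rw [hW]
    exact Submodule.mem_sup_left (Submodule.mem_span_singleton_self a)
  have hiff : ∀ pt ∈ W, (B (c + pt) (c + pt) = 1 / κ ↔ B pt pt = 1 / κt) := by
    intro pt hpt
    have h1 : B c pt = 0 := hcW pt hpt
    have h2 : B pt c = 0 := by rw [hsymm]; exact h1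
    have : B (c + pt) (c + pt) = 1 / κ - 1 / κt + B pt pt := by
      simp only [map_add, LinearMap.add_apply, hcc, h1, h2]
      ring
    rw [this]
    constructor
    · intro h; linarith
    · intro h; linarith
  refine ⟨hcc, hca, hiff, ?_⟩
  ext x
  simp only [Set.mem_inter_iff, Set.mem_setOf_eq]
  constructor
  · rintro ⟨hx, w, hw, rfl⟩
    refine ⟨w + κt⁻¹ • a, W.add_mem hw (W.smul_mem _ haW), ?_, by rw [hc]; abel⟩
    have hxe : pbar + w = c + (w + κt⁻¹ • a) := by rw [hc]; abel
    rw [hxe] at hx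
    exact (hiff _ (W.add_mem hw (W.smul_mem _ haW))).mp hx
  · rintro ⟨pt, hpt, hBpt, rfl⟩
    refine ⟨(hiff pt hpt).mpr hBpt, pt - κt⁻¹ • a,
      W.sub_mem hpt (W.smul_mem _ haW), by rw [hc]; abel⟩
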